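/- Let u₁ ∈ H₀ˢ(Ω₁) and u₂ ∈ H₀ˢ(Ω₂) be given with [u₁]ₛ, [u₂]ₛ < ∞ and ‖u₁‖_{L²} = ‖u₂‖_{L²} = 1. Define u_x(y) = u₁(y)u₂(y−x). Then for almost every x ∈ ℝᴺ, u_x ∈ H₀ˢ(Ω₁ ∩ (Ω₂ + x)); that is, u_x ∈ L²(ℝᴺ), [u_x]ₛ < ∞, and u_x = 0 a.e. outside Ω₁ ∩ (Ω₂ + x). -/

import Mathlib

open MeasureTheory Metric Bornology

noncomputable section

/-- Euclidean space ℝᴺ. -/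
abbrev E (N : ℕ) := EuclideanSpace ℝ (Fin N)

/-- Squared Gagliardo seminorm [u]ₛ² of order s. -/
def gag (N : ℕ) (s : ℝ) (u : E N → ℝ) : ℝ :=
  ∫ p : E N × E N, (u p.1 - u p.2) ^ 2 / ‖p.1 - p.2‖ ^ ((N : ℝ) + 2 * s)

/-- Finiteness of the Gagliardo seminorm: the kernel is integrable. -/
def GagFin (N : ℕ) (s : ℝ) (u : E N → ℝ) : Prop :=
  Integrable (fun p : E N × E N => (u p.1 - u p.2) ^ 2 / ‖p.1 - p.2‖ ^ ((N : ℝ) + 2 * s))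

/-- Membership in H₀ˢ(Ω): u ∈ L², finite Gagliardo seminorm, u = 0 a.e. outside Ω. -/
def InH0s (N : ℕ) (s : ℝ) (Ω : Set (E N)) (u : E N → ℝ) : Prop :=
  MemLp u 2 volume ∧ GagFin N s u ∧ ∀ᵐ y ∂(volume : Measure (E N)), y ∉ Ω → u y = 0

/-- First eigenvalue λ_Ω(α, D) of the fractional composite membrane problem. -/
def lam (N : ℕ) (s C α : ℝ) (Ω D : Set (E N)) : ℝ :=
  sInf {r : ℝ | ∃ u : E N → ℝ, InH0s N s Ω u ∧ 0 < (∫ y in Ω, (u y) ^ 2) ∧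
    r = (C / 2 * gag N s u + α * ∫ y in D, (u y) ^ 2) / ∫ y in Ω, (u y) ^ 2}

/-- Optimal value Λ_Ω(α, c) of the composite membrane optimization problem. -/
def Lam (N : ℕ) (s C α : ℝ) (Ω : Set (E N)) (c : ℝ) : ℝ :=
  sInf {r : ℝ | ∃ D : Set (E N), MeasurableSet D ∧ D ⊆ Ω ∧
    volume D = ENNReal.ofReal c ∧ r = lam N s C α Ω D}

/-- First Dirichlet eigenvalue of the fractional Laplacian on Ω. -/
def lam1 (N : ℕ) (s C : ℝ) (Ω : Set (E N)) : ℝ :=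
  sInf {r : ℝ | ∃ u : E N → ℝ, InH0s N s Ω u ∧ 0 < (∫ y in Ω, (u y) ^ 2) ∧
    r = (C / 2 * gag N s u) / ∫ y in Ω, (u y) ^ 2}

/-- Increasing Schwarz symmetrization of f relative to Ω. -/
def incRear (N : ℕ) (Ω : Set (E N)) (f : E N → ℝ) (x : E N) : ℝ :=
  sInf {t : ℝ | volume (ball (0 : E N) ‖x‖) < volume {y ∈ Ω | f y < t}}

/-- Decreasing Schwarz symmetrization of f (defined on all of ℝᴺ). -/
def decRear (N : ℕ) (f : E N → ℝ) (x : E N) : ℝ :=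
  sInf {t : ℝ | volume {y : E N | t < f y} < volume (ball (0 : E N) ‖x‖)}

/-- The function x ↦ |Ω₁ ∩ (Ω₂ + x)|. -/
def interVol (N : ℕ) (Ω₁ Ω₂ : Set (E N)) (x : E N) : ℝ :=
  (volume (Ω₁ ∩ ((fun z => z + x) '' Ω₂))).toReal

open scoped ENNReal

namespace Stmt16Aux

variable {N : ℕ}

lemma meas_kern {c : ℝ} (hc : 0 ≤ c) {w : E N → ℝ} (hw : Measurable w) :
    Measurable (fun p : E N × E N => (w p.1 - w p.2) ^ 2 / ‖p.1 - p.2‖ ^ c) :=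
  (((hw.comp measurable_fst).sub (hw.comp measurable_snd)).pow_const 2).div
    ((Real.continuous_rpow_const hc).measurable.comp (measurable_fst.sub measurable_snd).norm)

lemma kern_nonneg {c : ℝ} (w : E N → ℝ) (p : E N × E N) :
    0 ≤ (w p.1 - w p.2) ^ 2 / ‖p.1 - p.2‖ ^ c :=
  div_nonneg (sq_nonneg _) (Real.rpow_nonneg (norm_nonneg _) _)

lemma ae_prod_fst {p : E N → Prop} (h : ∀ᵐ z ∂(volume : Measure (E N)), p z) :
    ∀ᵐ q : E N × E N ∂volume, p q.1 := by
  rw [Measure.volume_eq_prod]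
  exact Measure.QuasiMeasurePreserving.ae Measure.quasiMeasurePreserving_fst h

lemma ae_prod_snd {p : E N → Prop} (h : ∀ᵐ z ∂(volume : Measure (E N)), p z) :
    ∀ᵐ q : E N × E N ∂volume, p q.2 := by
  rw [Measure.volume_eq_prod]
  exact Measure.QuasiMeasurePreserving.ae Measure.quasiMeasurePreserving_snd h

lemma ae_comp_sub (x : E N) {p : E N → Prop} (h : ∀ᵐ z ∂(volume : Measure (E N)), p z) :
    ∀ᵐ y ∂(volume : Measure (E N)), p (y - x) :=
  (measurePreserving_sub_right volume x).quasiMeasurePreserving.ae h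

lemma gagFin_of_lintegral {s : ℝ} (hc : 0 ≤ (N : ℝ) + 2 * s) {w : E N → ℝ} (hw : Measurable w)
    (h : (∫⁻ p : E N × E N,
        ENNReal.ofReal ((w p.1 - w p.2) ^ 2 / ‖p.1 - p.2‖ ^ ((N : ℝ) + 2 * s))) < ∞) :
    GagFin N s w := by
  refine ⟨(meas_kern hc hw).aestronglyMeasurable, ?_⟩
  rw [HasFiniteIntegral]
  simpa only [Real.enorm_eq_ofReal (kern_nonneg w _)] using h

lemma lintegral_of_gagFin {s : ℝ} {w : E N → ℝ} (h : GagFin N s w) :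
    (∫⁻ p : E N × E N,
        ENNReal.ofReal ((w p.1 - w p.2) ^ 2 / ‖p.1 - p.2‖ ^ ((N : ℝ) + 2 * s))) < ∞ := by
  have h2 := h.hasFiniteIntegral
  rw [HasFiniteIntegral] at h2
  simpa only [Real.enorm_eq_ofReal (kern_nonneg w _)] using h2

lemma lintegral_sq_lt_top {w : E N → ℝ} (h : Integrable (fun y => w y ^ 2) volume) :
    (∫⁻ y, ENNReal.ofReal (w y ^ 2) ∂(volume : Measure (E N))) < ∞ := by
  have h2 := h.hasFiniteIntegral
  rw [HasFiniteIntegral] at h2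
  simpa only [Real.enorm_eq_ofReal (sq_nonneg _)] using h2

lemma gagFin_congr {s : ℝ} {f g : E N → ℝ} (hfg : f =ᵐ[volume] g) (h : GagFin N s f) :
    GagFin N s g := by
  refine h.congr ?_
  filter_upwards [ae_prod_fst hfg, ae_prod_snd hfg] with p h1 h2
  rw [h1, h2]

lemma inH0s_congr {s : ℝ} {Ω : Set (E N)} {f g : E N → ℝ} (hfg : f =ᵐ[volume] g)
    (h : InH0s N s Ω f) : InH0s N s Ω g := by
  refine ⟨h.1.ae_eq hfg, gagFin_congr hfg h.2.1, ?_⟩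
  filter_upwards [h.2.2, hfg] with y h1 h2 hy
  rw [← h2]; exact h1 hy

lemma ptwise (a b c d K : ℝ) (hK : 0 ≤ K) :
    ENNReal.ofReal ((a * b - c * d) ^ 2 / K) ≤
      ENNReal.ofReal (2 * a ^ 2 * (b - d) ^ 2 / K) +
        ENNReal.ofReal (2 * d ^ 2 * (a - c) ^ 2 / K) := by
  rw [← ENNReal.ofReal_add (div_nonneg (by positivity) hK) (div_nonneg (by positivity) hK),
    ← add_div]
  exact ENNReal.ofReal_le_ofReal
    (div_le_div_of_nonneg_right (by nlinarith [sq_nonneg (a * (b - d) - d * (a - c))]) hK)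

/-- The shear `(y, h) ↦ (y, y - h)` preserves the product volume. -/
lemma shear_mp :
    MeasurePreserving (fun q : E N × E N => (q.1, q.1 - q.2))
      ((volume : Measure (E N)).prod volume) ((volume : Measure (E N)).prod volume) := by
  have h1 := measurePreserving_prod_sub (volume : Measure (E N)) volume
  have h2 : MeasurePreserving (Prod.map (id : E N → E N) (Neg.neg : E N → E N))
      ((volume : Measure (E N)).prod volume) ((volume : Measure (E N)).prod volume) :=
    (MeasurePreserving.id volume).prod (Measure.measurePreserving_neg volume)
  have h3 := h2.comp h1
  have hfun : (Prod.map (id : E N → E N) (Neg.neg : E N → E N))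
        ∘ (fun z : E N × E N => (z.1, z.2 - z.1))
      = fun q : E N × E N => (q.1, q.1 - q.2) := by
    funext q; simp [Prod.map, neg_sub]
  rwa [hfun] at h3

lemma core (c : ℝ) (hc : 0 ≤ c) (v₁ v₂ : E N → ℝ) (hv₁ : Measurable v₁) (hv₂ : Measurable v₂)
    (hM₁ : (∫⁻ y, ENNReal.ofReal (v₁ y ^ 2) ∂(volume : Measure (E N))) < ∞)
    (hM₂ : (∫⁻ y, ENNReal.ofReal (v₂ y ^ 2) ∂(volume : Measure (E N))) < ∞)
    (hJ₁ : (∫⁻ p : E N × E N, ENNReal.ofReal ((v₁ p.1 - v₁ p.2) ^ 2 / ‖p.1 - p.2‖ ^ c)) < ∞)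
    (hJ₂ : (∫⁻ p : E N × E N, ENNReal.ofReal ((v₂ p.1 - v₂ p.2) ^ 2 / ‖p.1 - p.2‖ ^ c)) < ∞) :
    (∫⁻ x : E N, ∫⁻ p : E N × E N,
      ENNReal.ofReal ((v₁ p.1 * v₂ (p.1 - x) - v₁ p.2 * v₂ (p.2 - x)) ^ 2
        / ‖p.1 - p.2‖ ^ c)) < ∞ := by
  have hKm : Measurable fun p : E N × E N => ‖p.1 - p.2‖ ^ c :=
    (Real.continuous_rpow_const hc).measurable.comp (measurable_fst.sub measurable_snd).norm
  have hK0 : ∀ p : E N × E N, 0 ≤ ‖p.1 - p.2‖ ^ c := fun p =>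
    Real.rpow_nonneg (norm_nonneg _) _
  set A : E N → E N × E N → ℝ≥0∞ := fun x p =>
    ENNReal.ofReal (2 * v₁ p.1 ^ 2 * (v₂ (p.1 - x) - v₂ (p.2 - x)) ^ 2 / ‖p.1 - p.2‖ ^ c)
    with hA
  set B : E N → E N × E N → ℝ≥0∞ := fun x p =>
    ENNReal.ofReal (2 * v₂ (p.2 - x) ^ 2 * (v₁ p.1 - v₁ p.2) ^ 2 / ‖p.1 - p.2‖ ^ c) with hB
  have hvm1 : Measurable fun q : E N × (E N × E N) => v₂ (q.2.1 - q.1) :=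
    hv₂.comp ((measurable_fst.comp measurable_snd).sub measurable_fst)
  have hvm2 : Measurable fun q : E N × (E N × E N) => v₂ (q.2.2 - q.1) :=
    hv₂.comp ((measurable_snd.comp measurable_snd).sub measurable_fst)
  have hAum : Measurable fun q : E N × (E N × E N) => A q.1 q.2 := by
    apply Measurable.ennreal_ofReal
    exact ((((hv₁.comp (measurable_fst.comp measurable_snd)).pow_const 2).const_mul 2).mul
      ((hvm1.sub hvm2).pow_const 2)).div (hKm.comp measurable_snd)
  have hBum : Measurable fun q : E N × (E N × E N) => B q.1 q.2 := by
    apply Measurable.ennreal_ofReal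
    exact (((hvm2.pow_const 2).const_mul 2).mul
      (((hv₁.comp (measurable_fst.comp measurable_snd)).sub
        (hv₁.comp (measurable_snd.comp measurable_snd))).pow_const 2)).div
      (hKm.comp measurable_snd)
  have step2 : (∫⁻ x : E N, ∫⁻ p : E N × E N,
        ENNReal.ofReal ((v₁ p.1 * v₂ (p.1 - x) - v₁ p.2 * v₂ (p.2 - x)) ^ 2 / ‖p.1 - p.2‖ ^ c))
      ≤ (∫⁻ x : E N, ∫⁻ p : E N × E N, A x p) + ∫⁻ x : E N, ∫⁻ p : E N × E N, B x p := by
    calc (∫⁻ x : E N, ∫⁻ p : E N × E N,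
        ENNReal.ofReal ((v₁ p.1 * v₂ (p.1 - x) - v₁ p.2 * v₂ (p.2 - x)) ^ 2 / ‖p.1 - p.2‖ ^ c))
        ≤ ∫⁻ x : E N, ∫⁻ p : E N × E N, (A x p + B x p) :=
          lintegral_mono fun x => lintegral_mono fun p => ptwise _ _ _ _ _ (hK0 p)
      _ = ∫⁻ x : E N, ((∫⁻ p : E N × E N, A x p) + ∫⁻ p : E N × E N, B x p) :=
          lintegral_congr fun x => lintegral_add_left (hAum.comp measurable_prodMk_left) _
      _ = _ := lintegral_add_left hAum.lintegral_prod_right' _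
  -- the inner translation integral for the A-term
  set G : E N → ℝ≥0∞ := fun h => ∫⁻ z, ENNReal.ofReal ((v₂ z - v₂ (z - h)) ^ 2) with hG
  have hGum : Measurable fun q : E N × E N => ENNReal.ofReal ((v₂ q.2 - v₂ (q.2 - q.1)) ^ 2) :=
    (((hv₂.comp measurable_snd).sub
      (hv₂.comp (measurable_snd.sub measurable_fst))).pow_const 2).ennreal_ofReal
  have hGm : Measurable G := hGum.lintegral_prod_right'
  have hTA : (∫⁻ x : E N, ∫⁻ p : E N × E N, A x p)
      = (∫⁻ y, ENNReal.ofReal (2 * v₁ y ^ 2))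
        * ∫⁻ p : E N × E N, ENNReal.ofReal ((v₂ p.1 - v₂ p.2) ^ 2 / ‖p.1 - p.2‖ ^ c) := by
    rw [lintegral_lintegral_swap hAum.aemeasurable]
    have inner : ∀ p : E N × E N, (∫⁻ x, A x p)
        = ENNReal.ofReal (2 * v₁ p.1 ^ 2 / ‖p.1 - p.2‖ ^ c) * G (p.1 - p.2) := by
      intro p
      have e1 : ∀ x, A x p = ENNReal.ofReal (2 * v₁ p.1 ^ 2 / ‖p.1 - p.2‖ ^ c) *
          ENNReal.ofReal ((v₂ (p.1 - x) - v₂ (p.2 - x)) ^ 2) := by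
        intro x
        rw [hA, ← ENNReal.ofReal_mul (div_nonneg (by positivity) (hK0 p)),
          div_mul_eq_mul_div]
      simp_rw [e1]
      rw [lintegral_const_mul' _ _ ENNReal.ofReal_ne_top]
      congr 1
      calc (∫⁻ x, ENNReal.ofReal ((v₂ (p.1 - x) - v₂ (p.2 - x)) ^ 2))
          = ∫⁻ x, (fun z => ENNReal.ofReal ((v₂ z - v₂ (z - (p.1 - p.2))) ^ 2)) (p.1 - x) := by
            refine lintegral_congr fun x => ?_
            simp only
            rw [show p.1 - x - (p.1 - p.2) = p.2 - x from by abel]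
        _ = G (p.1 - p.2) :=
            (Measure.measurePreserving_sub_left volume p.1).lintegral_comp
              (((hv₂.sub (hv₂.comp (measurable_id.sub measurable_const))).pow_const
                2).ennreal_ofReal)
    simp_rw [inner]
    rw [Measure.volume_eq_prod]
    have hFm : Measurable fun p : E N × E N =>
        ENNReal.ofReal (2 * v₁ p.1 ^ 2 / ‖p.1 - p.2‖ ^ c) * G (p.1 - p.2) :=
      (((((hv₁.comp measurable_fst).pow_const 2).const_mul 2).div hKm).ennreal_ofReal).mul
        (hGm.comp (measurable_fst.sub measurable_snd))
    rw [← shear_mp.lintegral_comp hFm]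
    have e3 : ∀ q : E N × E N,
        (fun p : E N × E N => ENNReal.ofReal (2 * v₁ p.1 ^ 2 / ‖p.1 - p.2‖ ^ c) * G (p.1 - p.2))
          ((fun q : E N × E N => (q.1, q.1 - q.2)) q)
        = ENNReal.ofReal (2 * v₁ q.1 ^ 2) * (ENNReal.ofReal ((‖q.2‖ ^ c)⁻¹) * G q.2) := by
      intro q
      simp only [sub_sub_cancel]
      rw [div_eq_mul_inv, ENNReal.ofReal_mul (by positivity), mul_assoc]
    rw [lintegral_congr e3,
      lintegral_prod_mul (f := fun y : E N => ENNReal.ofReal (2 * v₁ y ^ 2))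
        (g := fun h : E N => ENNReal.ofReal ((‖h‖ ^ c)⁻¹) * G h)
        (((hv₁.pow_const 2).const_mul 2).ennreal_ofReal).aemeasurable
        (((((Real.continuous_rpow_const hc).measurable.comp
          measurable_norm).inv.ennreal_ofReal).mul hGm).aemeasurable)]
    congr 1
    have e4 : ∀ h : E N, ENNReal.ofReal ((‖h‖ ^ c)⁻¹) * G h
        = ∫⁻ z, ENNReal.ofReal ((v₂ z - v₂ (z - h)) ^ 2 / ‖h‖ ^ c) := by
      intro h
      rw [hG]
      rw [← lintegral_const_mul' _ _ ENNReal.ofReal_ne_top]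
      refine lintegral_congr fun z => ?_
      rw [← ENNReal.ofReal_mul (by positivity), inv_mul_eq_div]
    rw [lintegral_congr e4]
    rw [lintegral_lintegral (f := fun h z =>
      ENNReal.ofReal ((v₂ z - v₂ (z - h)) ^ 2 / ‖h‖ ^ c)) (by
      apply Measurable.aemeasurable
      apply Measurable.ennreal_ofReal
      exact (((hv₂.comp measurable_snd).sub
        (hv₂.comp (measurable_snd.sub measurable_fst))).pow_const 2).div
        ((Real.continuous_rpow_const hc).measurable.comp (measurable_fst.norm)))]
    have hS : MeasurePreserving (fun q : E N × E N => (q.2, q.2 - q.1))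
        ((volume : Measure (E N)).prod volume) ((volume : Measure (E N)).prod volume) :=
      shear_mp.comp Measure.measurePreserving_swap
    refine Eq.trans (lintegral_congr fun q => ?_)
      (hS.lintegral_comp (f := fun p : E N × E N =>
        ENNReal.ofReal ((v₂ p.1 - v₂ p.2) ^ 2 / ‖p.1 - p.2‖ ^ c)) (by
          apply Measurable.ennreal_ofReal
          exact (((hv₂.comp measurable_fst).sub (hv₂.comp measurable_snd)).pow_const 2).div hKm))
    simp only [sub_sub_cancel]
  have hTB : (∫⁻ x : E N, ∫⁻ p : E N × E N, B x p)
      = (∫⁻ p : E N × E N, ENNReal.ofReal (2 * (v₁ p.1 - v₁ p.2) ^ 2 / ‖p.1 - p.2‖ ^ c))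
        * ∫⁻ y, ENNReal.ofReal (v₂ y ^ 2) := by
    rw [lintegral_lintegral_swap hBum.aemeasurable]
    have inner : ∀ p : E N × E N, (∫⁻ x, B x p)
        = ENNReal.ofReal (2 * (v₁ p.1 - v₁ p.2) ^ 2 / ‖p.1 - p.2‖ ^ c)
          * ∫⁻ y, ENNReal.ofReal (v₂ y ^ 2) := by
      intro p
      have e1 : ∀ x, B x p = ENNReal.ofReal (2 * (v₁ p.1 - v₁ p.2) ^ 2 / ‖p.1 - p.2‖ ^ c)
          * ENNReal.ofReal (v₂ (p.2 - x) ^ 2) := by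
        intro x
        rw [hB, ← ENNReal.ofReal_mul (div_nonneg (by positivity) (hK0 p))]

        ring
      simp_rw [e1]
      rw [lintegral_const_mul' _ _ ENNReal.ofReal_ne_top]
      exact congrArg _ ((Measure.measurePreserving_sub_left volume p.2).lintegral_comp
        ((hv₂.pow_const 2).ennreal_ofReal))
    simp_rw [inner]
    exact lintegral_mul_const _ (by
      apply Measurable.ennreal_ofReal
      exact ((((hv₁.comp measurable_fst).sub (hv₁.comp measurable_snd)).pow_const
        2).const_mul 2).div hKm)
  refine lt_of_le_of_lt step2 (ENNReal.add_lt_top.2 ⟨?_, ?_⟩)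
  · rw [hTA]
    refine ENNReal.mul_lt_top ?_ hJ₂
    have e5 : (∫⁻ y, ENNReal.ofReal (2 * v₁ y ^ 2) ∂(volume : Measure (E N)))
        = 2 * ∫⁻ y, ENNReal.ofReal (v₁ y ^ 2) := by
      rw [← lintegral_const_mul' _ _ (by norm_num : (2 : ℝ≥0∞) ≠ ⊤)]
      refine lintegral_congr fun y => ?_
      rw [ENNReal.ofReal_mul (by norm_num : (0:ℝ) ≤ 2)]
      simp [ENNReal.ofReal_ofNat]
    rw [e5]
    exact ENNReal.mul_lt_top (by simp) hM₁
  · rw [hTB]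
    refine ENNReal.mul_lt_top ?_ hM₂
    have e6 : (∫⁻ p : E N × E N, ENNReal.ofReal (2 * (v₁ p.1 - v₁ p.2) ^ 2 / ‖p.1 - p.2‖ ^ c))
        = 2 * ∫⁻ p : E N × E N, ENNReal.ofReal ((v₁ p.1 - v₁ p.2) ^ 2 / ‖p.1 - p.2‖ ^ c) := by
      rw [← lintegral_const_mul' _ _ (by norm_num : (2 : ℝ≥0∞) ≠ ⊤)]
      refine lintegral_congr fun p => ?_
      rw [mul_div_assoc, ENNReal.ofReal_mul (by norm_num : (0:ℝ) ≤ 2)]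
      simp [ENNReal.ofReal_ofNat]
    rw [e6]
    exact ENNReal.mul_lt_top (by simp) hJ₁


lemma sq_core (v₁ v₂ : E N → ℝ) (hv₁ : Measurable v₁) (hv₂ : Measurable v₂)
    (hM₁ : (∫⁻ y, ENNReal.ofReal (v₁ y ^ 2) ∂(volume : Measure (E N))) < ∞)
    (hM₂ : (∫⁻ y, ENNReal.ofReal (v₂ y ^ 2) ∂(volume : Measure (E N))) < ∞) :
    (∫⁻ x : E N, ∫⁻ y : E N, ENNReal.ofReal ((v₁ y * v₂ (y - x)) ^ 2)) < ∞ := by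
  have hum : Measurable fun q : E N × E N => ENNReal.ofReal ((v₁ q.2 * v₂ (q.2 - q.1)) ^ 2) :=
    (((hv₁.comp measurable_snd).mul
      (hv₂.comp (measurable_snd.sub measurable_fst))).pow_const 2).ennreal_ofReal
  rw [lintegral_lintegral_swap hum.aemeasurable]
  have inner : ∀ y : E N, (∫⁻ x, ENNReal.ofReal ((v₁ y * v₂ (y - x)) ^ 2))
      = ENNReal.ofReal (v₁ y ^ 2) * ∫⁻ z, ENNReal.ofReal (v₂ z ^ 2) := by
    intro y
    have e1 : ∀ x : E N, ENNReal.ofReal ((v₁ y * v₂ (y - x)) ^ 2)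
        = ENNReal.ofReal (v₁ y ^ 2) * ENNReal.ofReal (v₂ (y - x) ^ 2) := by
      intro x
      rw [← ENNReal.ofReal_mul (sq_nonneg _)]
      congr 1
      ring
    simp_rw [e1]
    rw [lintegral_const_mul' _ _ ENNReal.ofReal_ne_top]
    exact congrArg _ ((Measure.measurePreserving_sub_left volume y).lintegral_comp
      ((hv₂.pow_const 2).ennreal_ofReal))
  simp_rw [inner]
  rw [lintegral_mul_const' _ _ hM₂.ne]
  exact ENNReal.mul_lt_top hM₁ hM₂

end Stmt16Aux

theorem stmt16 {N : ℕ} (hN : 1 ≤ N) (s : ℝ) (hs : s ∈ Set.Ioo (0 : ℝ) 1)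
    (Ω₁ Ω₂ : Set (E N)) (u₁ u₂ : E N → ℝ)
    (h₁ : InH0s N s Ω₁ u₁) (h₂ : InH0s N s Ω₂ u₂)
    (hn₁ : (∫ y, (u₁ y) ^ 2) = 1) (hn₂ : (∫ y, (u₂ y) ^ 2) = 1) :
    ∀ᵐ x ∂(volume : Measure (E N)),
      InH0s N s (Ω₁ ∩ ((fun z => z + x) '' Ω₂)) (fun y => u₁ y * u₂ (y - x)) := by
  obtain ⟨hm₁, hg₁, hz₁⟩ := h₁
  obtain ⟨hm₂, hg₂, hz₂⟩ := h₂
  have hc : 0 ≤ (N : ℝ) + 2 * s := by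
    have h1 := hs.1
    have h2 : (0 : ℝ) ≤ N := Nat.cast_nonneg N
    linarith
  have a₁ : AEMeasurable u₁ (volume : Measure (E N)) := hm₁.aestronglyMeasurable.aemeasurable
  have a₂ : AEMeasurable u₂ (volume : Measure (E N)) := hm₂.aestronglyMeasurable.aemeasurable
  set v₁ : E N → ℝ := a₁.mk u₁ with hv₁def
  set v₂ : E N → ℝ := a₂.mk u₂ with hv₂def
  have hv₁ : Measurable v₁ := a₁.measurable_mk
  have hv₂ : Measurable v₂ := a₂.measurable_mk
  have he₁ : u₁ =ᵐ[volume] v₁ := a₁.ae_eq_mk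
  have he₂ : u₂ =ᵐ[volume] v₂ := a₂.ae_eq_mk
  have hm₁' : MemLp v₁ 2 volume := hm₁.ae_eq he₁
  have hm₂' : MemLp v₂ 2 volume := hm₂.ae_eq he₂
  have hM₁ := Stmt16Aux.lintegral_sq_lt_top hm₁'.integrable_sq
  have hM₂ := Stmt16Aux.lintegral_sq_lt_top hm₂'.integrable_sq
  have hJ₁ := Stmt16Aux.lintegral_of_gagFin (Stmt16Aux.gagFin_congr he₁ hg₁)
  have hJ₂ := Stmt16Aux.lintegral_of_gagFin (Stmt16Aux.gagFin_congr he₂ hg₂)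
  have hz₁' : ∀ᵐ y ∂(volume : Measure (E N)), y ∉ Ω₁ → v₁ y = 0 := by
    filter_upwards [hz₁, he₁] with y hy1 hy2 hy
    rw [← hy2]; exact hy1 hy
  have hz₂' : ∀ᵐ y ∂(volume : Measure (E N)), y ∉ Ω₂ → v₂ y = 0 := by
    filter_upwards [hz₂, he₂] with y hy1 hy2 hy
    rw [← hy2]; exact hy1 hy
  have htrans : ∀ x : E N,
      (fun y => v₁ y * v₂ (y - x)) =ᵐ[volume] fun y => u₁ y * u₂ (y - x) := by
    intro x
    filter_upwards [he₁, Stmt16Aux.ae_comp_sub x he₂] with y hy1 hy2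
    rw [hy1, hy2]
  have hcore := Stmt16Aux.core ((N : ℝ) + 2 * s) hc v₁ v₂ hv₁ hv₂ hM₁ hM₂ hJ₁ hJ₂
  have hsqcore := Stmt16Aux.sq_core v₁ v₂ hv₁ hv₂ hM₁ hM₂
  have hKm : Measurable fun p : E N × E N => ‖p.1 - p.2‖ ^ ((N : ℝ) + 2 * s) :=
    (Real.continuous_rpow_const hc).measurable.comp (measurable_fst.sub measurable_snd).norm
  have hWum : Measurable fun q : E N × (E N × E N) =>
      ENNReal.ofReal ((v₁ q.2.1 * v₂ (q.2.1 - q.1) - v₁ q.2.2 * v₂ (q.2.2 - q.1)) ^ 2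
        / ‖q.2.1 - q.2.2‖ ^ ((N : ℝ) + 2 * s)) := by
    apply Measurable.ennreal_ofReal
    refine Measurable.div ?_ (hKm.comp measurable_snd)
    refine Measurable.pow_const ?_ 2
    exact ((hv₁.comp (measurable_fst.comp measurable_snd)).mul
        (hv₂.comp ((measurable_fst.comp measurable_snd).sub measurable_fst))).sub
      ((hv₁.comp (measurable_snd.comp measurable_snd)).mul
        (hv₂.comp ((measurable_snd.comp measurable_snd).sub measurable_fst)))
  have hsqum : Measurable fun q : E N × E N =>
      ENNReal.ofReal ((v₁ q.2 * v₂ (q.2 - q.1)) ^ 2) :=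
    (((hv₁.comp measurable_snd).mul
      (hv₂.comp (measurable_snd.sub measurable_fst))).pow_const 2).ennreal_ofReal
  have hae1 : ∀ᵐ x ∂(volume : Measure (E N)), (∫⁻ p : E N × E N,
      ENNReal.ofReal ((v₁ p.1 * v₂ (p.1 - x) - v₁ p.2 * v₂ (p.2 - x)) ^ 2
        / ‖p.1 - p.2‖ ^ ((N : ℝ) + 2 * s))) < ∞ :=
    ae_lt_top hWum.lintegral_prod_right' hcore.ne
  have hae2 : ∀ᵐ x ∂(volume : Measure (E N)),
      (∫⁻ y : E N, ENNReal.ofReal ((v₁ y * v₂ (y - x)) ^ 2)) < ∞ :=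
    ae_lt_top hsqum.lintegral_prod_right' hsqcore.ne
  filter_upwards [hae1, hae2] with x hx1 hx2
  apply Stmt16Aux.inH0s_congr (htrans x)
  have hwm : Measurable fun y => v₁ y * v₂ (y - x) :=
    hv₁.mul (hv₂.comp (measurable_id.sub measurable_const))
  refine ⟨?_, ?_, ?_⟩
  · rw [memLp_two_iff_integrable_sq hwm.aestronglyMeasurable]
    refine ⟨(hwm.pow_const 2).aestronglyMeasurable, ?_⟩
    rw [HasFiniteIntegral]
    simpa only [Real.enorm_eq_ofReal (sq_nonneg _)] using hx2
  · exact Stmt16Aux.gagFin_of_lintegral hc hwm hx1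
  · filter_upwards [hz₁', Stmt16Aux.ae_comp_sub x hz₂'] with y hy1 hy2 hy
    by_cases hmem : y ∈ Ω₁
    · have him : y ∉ (fun z => z + x) '' Ω₂ := fun hcon => hy ⟨hmem, hcon⟩
      have him2 : y - x ∉ Ω₂ := fun hc2 => him ⟨y - x, hc2, by simp⟩
      rw [hy2 him2, mul_zero]
    · rw [hy1 hmem, zero_mul]

end
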